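/- For every real x the following bounds hold: 0 ≤ Ψ(x) < e, 0 ≤ Ψ'(x) ≤ √(54/e), 0 < Φ(x) < √(2πe), and 0 < Φ'(x) ≤ √e, where Ψ' and Φ' denote the derivatives of Ψ and Φ. -/

import Mathlib

open Real MeasureTheory Set

/-- Ψ(x) = 0 for x ≤ 1/2 and Ψ(x) = exp(1 − 1/(2x−1)²) for x > 1/2. -/
noncomputable def Psi (x : ℝ) : ℝ :=
  if x ≤ 1/2 then 0 else Real.exp (1 - 1/(2*x - 1)^2)

/-- Φ(x) = √e · ∫_{−∞}^x exp(−t²/2) dt. -/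
noncomputable def Phi (x : ℝ) : ℝ :=
  Real.sqrt (Real.exp 1) * ∫ t in Set.Iic x, Real.exp (-t^2/2)

lemma psi_nonneg (y : ℝ) : 0 ≤ Psi y := by
  unfold Psi; split <;> positivity

lemma psi_hasDeriv {x : ℝ} (hx : 1/2 < x) :
    HasDerivAt Psi (Real.exp (1 - 1/(2*x - 1)^2) * (4/(2*x - 1)^3)) x := by
  have hu : (0:ℝ) < 2*x - 1 := by linarith
  have hu0 : (2*x - 1) ≠ 0 := ne_of_gt hu
  have h1 : HasDerivAt (fun y : ℝ => 2*y - 1) 2 x := by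
    simpa using ((hasDerivAt_id x).const_mul 2).sub_const 1
  have h2 : HasDerivAt (fun y : ℝ => (2*y - 1)^2) (2 * (2*x - 1)^1 * 2) x := by
    simpa using h1.fun_pow 2
  have h3 : HasDerivAt (fun y : ℝ => ((2*y - 1)^2)⁻¹)
      (-(2 * (2*x - 1)^1 * 2) / ((2*x - 1)^2)^2) x := h2.inv (by positivity)
  have h4 : HasDerivAt (fun y : ℝ => 1 - 1/(2*y - 1)^2)
      (-(-(2 * (2*x - 1)^1 * 2) / ((2*x - 1)^2)^2)) x := by
    simpa [one_div] using h3.const_sub 1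
  have h5 := h4.exp
  have heq : Psi =ᶠ[nhds x] fun y => Real.exp (1 - 1/(2*y - 1)^2) := by
    filter_upwards [Ioi_mem_nhds hx] with y hy
    have hy' : ¬ y ≤ 1/2 := not_le.2 (mem_Ioi.1 hy)
    simp only [Psi, if_neg hy']
  have h6 : HasDerivAt Psi
      (Real.exp (1 - 1/(2*x - 1)^2) * -(-(2 * (2*x - 1)^1 * 2) / ((2*x - 1)^2)^2)) x :=
    h5.congr_of_eventuallyEq heq
  convert h6 using 1
  field_simp
  ring

lemma key_bound {t : ℝ} (ht : 0 < t) :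
    16 * t^3 * Real.exp (2 - 2*t) ≤ 54 * Real.exp (-1) := by
  have h1 : 2*t/3 ≤ Real.exp (2*t/3 - 1) := by
    have := Real.add_one_le_exp (2*t/3 - 1); linarith
  have h3 : (2*t/3)^3 ≤ (Real.exp (2*t/3 - 1))^3 :=
    pow_le_pow_left₀ (by positivity) h1 3
  have h4 : (Real.exp (2*t/3 - 1))^3 = Real.exp (2*t - 3) := by
    rw [← Real.exp_nat_mul]; ring_nf
  rw [h4] at h3
  have h5 : Real.exp (2*t - 3) * Real.exp (2 - 2*t) = Real.exp (-1) := by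
    rw [← Real.exp_add]; ring_nf
  have h6 : (0:ℝ) < Real.exp (2 - 2*t) := Real.exp_pos _
  nlinarith [Real.exp_pos (2*t - 3)]

lemma psi_deriv_le {x : ℝ} (hx : 1/2 < x) :
    Real.exp (1 - 1/(2*x - 1)^2) * (4/(2*x - 1)^3) ≤ Real.sqrt (54 / Real.exp 1) := by
  have hu : (0:ℝ) < 2*x - 1 := by linarith
  set u := 2*x - 1 with hudef
  rw [show (54:ℝ) / Real.exp 1 = 54 * Real.exp (-1) by
    rw [Real.exp_neg]; ring]
  rw [Real.le_sqrt (by positivity) (by positivity)]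
  set t := 1/u^2 with htdef
  have ht : 0 < t := by positivity
  have hsq : (Real.exp (1 - t) * (4/u^3))^2 = 16 * t^3 * Real.exp (2 - 2*t) := by
    have hu0 : u ≠ 0 := ne_of_gt hu
    rw [mul_pow, sq (Real.exp (1 - t)), ← Real.exp_add,
      show (1 - t) + (1 - t) = 2 - 2*t by ring, htdef]
    field_simp
    ring
  rw [hsq]
  exact key_bound ht

lemma g_integrable : Integrable (fun t : ℝ => Real.exp (-t^2/2)) := by
  have h := integrable_exp_neg_mul_sq (b := (1/2 : ℝ)) (by norm_num)
  have : (fun t : ℝ => Real.exp (-t^2/2)) = fun t : ℝ => Real.exp (-(1/2) * t^2) := by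
    funext t; ring_nf
  rw [this]; exact h

lemma g_total : (∫ t : ℝ, Real.exp (-t^2/2)) = Real.sqrt (2 * Real.pi) := by
  have : (fun t : ℝ => Real.exp (-t^2/2)) = fun t : ℝ => Real.exp (-(1/2) * t^2) := by
    funext t; ring_nf
  rw [this, integral_gaussian, show Real.pi / (1/2) = 2 * Real.pi by ring]

lemma g_setIntegral_pos (s : Set ℝ) (_hs : MeasurableSet s) (hμ : volume s ≠ 0) :
    0 < ∫ t in s, Real.exp (-t^2/2) := by
  rw [setIntegral_pos_iff_support_of_nonneg_ae]
  · have : Function.support (fun t : ℝ => Real.exp (-t^2/2)) = Set.univ := by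
      ext t; simp [Function.support, (Real.exp_pos _).ne']
    rw [this, Set.univ_inter]
    exact hμ.bot_lt
  · filter_upwards with t using (Real.exp_pos _).le
  · exact g_integrable.integrableOn

/-- For every real x: 0 ≤ Ψ(x) < e, 0 ≤ Ψ'(x) ≤ √(54/e), 0 < Φ(x) < √(2πe),
and 0 < Φ'(x) ≤ √e. -/
theorem stmt4 (x : ℝ) :
    (0 ≤ Psi x ∧ Psi x < Real.exp 1) ∧
    (0 ≤ deriv Psi x ∧ deriv Psi x ≤ Real.sqrt (54 / Real.exp 1)) ∧
    (0 < Phi x ∧ Phi x < Real.sqrt (2 * Real.pi * Real.exp 1)) ∧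
    (0 < deriv Phi x ∧ deriv Phi x ≤ Real.sqrt (Real.exp 1)) := by
  have hPsi_lt : Psi x < Real.exp 1 := by
    unfold Psi; split
    · exact Real.exp_pos 1
    · rename_i h
      have hu : (0:ℝ) < 2*x - 1 := by
        rw [not_le] at h; linarith
      apply Real.exp_lt_exp.2
      have : 0 < 1/(2*x - 1)^2 := by positivity
      linarith
  have hderivPsi : 0 ≤ deriv Psi x ∧ deriv Psi x ≤ Real.sqrt (54 / Real.exp 1) := by
    rcases le_or_gt x (1/2) with hx | hx
    · have hmin : IsLocalMin Psi x := by
        have h0 : Psi x = 0 := by unfold Psi; rw [if_pos hx]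
        exact Filter.Eventually.of_forall fun y => h0 ▸ psi_nonneg y
      rw [hmin.deriv_eq_zero]
      exact ⟨le_refl 0, Real.sqrt_nonneg _⟩
    · have h := (psi_hasDeriv hx).deriv
      rw [h]
      constructor
      · have hu : (0:ℝ) < 2*x - 1 := by linarith
        positivity
      · exact psi_deriv_le hx
  -- Phi
  have hg := g_integrable
  have hIic_pos : 0 < ∫ t in Iic x, Real.exp (-t^2/2) :=
    g_setIntegral_pos _ measurableSet_Iic (by rw [Real.volume_Iic]; simp)
  have hIoi_pos : 0 < ∫ t in Ioi x, Real.exp (-t^2/2) :=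
    g_setIntegral_pos _ measurableSet_Ioi (by rw [Real.volume_Ioi]; simp)
  have hsplit : (∫ t in Iic x, Real.exp (-t^2/2)) + ∫ t in Ioi x, Real.exp (-t^2/2)
      = Real.sqrt (2 * Real.pi) := by
    rw [intervalIntegral.integral_Iic_add_Ioi hg.integrableOn hg.integrableOn, g_total]
  have hIic_lt : (∫ t in Iic x, Real.exp (-t^2/2)) < Real.sqrt (2 * Real.pi) := by
    linarith
  have hPhi_pos : 0 < Phi x := by
    unfold Phi
    have : 0 < Real.sqrt (Real.exp 1) := Real.sqrt_pos.2 (Real.exp_pos 1)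
    positivity
  have hPhi_lt : Phi x < Real.sqrt (2 * Real.pi * Real.exp 1) := by
    unfold Phi
    rw [Real.sqrt_mul (by positivity)]
    have h0 : 0 < Real.sqrt (Real.exp 1) := Real.sqrt_pos.2 (Real.exp_pos 1)
    calc Real.sqrt (Real.exp 1) * ∫ t in Iic x, Real.exp (-t^2/2)
        < Real.sqrt (Real.exp 1) * Real.sqrt (2 * Real.pi) := by
          exact mul_lt_mul_of_pos_left hIic_lt h0
      _ = Real.sqrt (2 * Real.pi) * Real.sqrt (Real.exp 1) := mul_comm _ _
  have hcont : Continuous (fun t : ℝ => Real.exp (-t^2/2)) := by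
    continuity
  have hPhi_deriv : HasDerivAt Phi (Real.sqrt (Real.exp 1) * Real.exp (-x^2/2)) x := by
    have hF : HasDerivAt (fun u : ℝ => ∫ t in (0:ℝ)..u, Real.exp (-t^2/2))
        (Real.exp (-x^2/2)) x := (hcont.integral_hasStrictDerivAt 0 x).hasDerivAt
    have hF2 : HasDerivAt (fun u : ℝ =>
        (∫ t in Iic (0:ℝ), Real.exp (-t^2/2)) + ∫ t in (0:ℝ)..u, Real.exp (-t^2/2))
        (Real.exp (-x^2/2)) x := by
      simpa using hF.const_add (∫ t in Iic (0:ℝ), Real.exp (-t^2/2))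
    have heq : Phi = fun u : ℝ => Real.sqrt (Real.exp 1) *
        ((∫ t in Iic (0:ℝ), Real.exp (-t^2/2)) + ∫ t in (0:ℝ)..u, Real.exp (-t^2/2)) := by
      funext u
      unfold Phi
      congr 1
      rw [← intervalIntegral.integral_Iic_sub_Iic hg.integrableOn hg.integrableOn]
      ring
    rw [heq]
    exact hF2.const_mul _
  have hd : deriv Phi x = Real.sqrt (Real.exp 1) * Real.exp (-x^2/2) := hPhi_deriv.deriv
  refine ⟨⟨psi_nonneg x, hPsi_lt⟩, hderivPsi, ⟨hPhi_pos, hPhi_lt⟩, ?_, ?_⟩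
  · rw [hd]; positivity
  · rw [hd]
    have h1 : Real.exp (-x^2/2) ≤ 1 := by
      rw [← Real.exp_zero]
      apply Real.exp_le_exp.2
      nlinarith [sq_nonneg x]
    nlinarith [Real.sqrt_nonneg (Real.exp 1), h1]
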